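/- Let D be a balanced bipartite digraph with colour classes of cardinality a ≥ 2. If the minimum degree δ(D) ≥ (3a+1)/2, then D contains an oriented cycle of length 2a. -/

import Mathlib

namespace BipDigraph

variable {V : Type}

/-- Out-degree of `v` in the digraph `(V, A)`. -/
noncomputable def outdeg (A : V → V → Prop) (v : V) : ℕ := Nat.card {w : V // A v w}

/-- In-degree of `v` in the digraph `(V, A)`. -/
noncomputable def indeg (A : V → V → Prop) (v : V) : ℕ := Nat.card {w : V // A w v}

/-- Degree of `v`: out-degree plus in-degree. -/
noncomputable def deg (A : V → V → Prop) (v : V) : ℕ := outdeg A v + indeg A v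

/-- Out-degree of `v` relative to the vertex set `S`. -/
noncomputable def outdegIn (A : V → V → Prop) (S : Set V) (v : V) : ℕ := Nat.card {w : V // w ∈ S ∧ A v w}

/-- In-degree of `v` relative to the vertex set `S`. -/
noncomputable def indegIn (A : V → V → Prop) (S : Set V) (v : V) : ℕ := Nat.card {w : V // w ∈ S ∧ A w v}

/-- Degree of `v` relative to the vertex set `S`. -/
noncomputable def degIn (A : V → V → Prop) (S : Set V) (v : V) : ℕ := outdegIn A S v + indegIn A S v

/-- The arc `(u,v)` belongs to the matching given by the function `M` on the class `X`. -/
def InM (X : Finset V) (M : V → V) (u v : V) : Prop := u ∈ X ∧ M u = v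

/-- The arc `(u,v)` is an arc of the digraph not belonging to the matching. -/
def NotM (A : V → V → Prop) (X : Finset V) (M : V → V) (u v : V) : Prop :=
  A u v ∧ ¬ InM X M u v

/-- `M` is a complete matching from `X` to `Y`: every `x ∈ X` is matched along an arc
to a vertex of `Y`, and the matching arcs are independent. -/
def CompleteMatching (A : V → V → Prop) (X Y : Finset V) (M : V → V) : Prop :=
  (∀ x ∈ X, M x ∈ Y ∧ A x (M x)) ∧ Set.InjOn M X

/-- Consecutive arcs of the list alternately satisfy `P` and `Q`, starting with `P`. -/
def Alt (P Q : V → V → Prop) : List V → Prop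
  | [] => True
  | [_] => True
  | a :: b :: t => P a b ∧ Alt Q P (b :: t)

/-- `p` is an oriented path in `(V, A)` whose arcs are alternately in the matching `M`
(on `X`) and outside of it. -/
def IsCompatPath (A : V → V → Prop) (X : Finset V) (M : V → V) (p : List V) : Prop :=
  p ≠ [] ∧ p.Nodup ∧ p.Chain' A ∧
    (Alt (InM X M) (NotM A X M) p ∨ Alt (NotM A X M) (InM X M) p)

/-- An `M`-compatible oriented path from `u` to `v`. -/
def IsCompatPathFromTo (A : V → V → Prop) (X : Finset V) (M : V → V)
    (p : List V) (u v : V) : Prop :=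
  IsCompatPath A X M p ∧ p.head? = some u ∧ p.getLast? = some v

/-- `p` lists the vertices of an oriented cycle of `(V, A)` in cyclic order;
its length (number of arcs = number of vertices) is `p.length`. -/
def IsCycle (A : V → V → Prop) (p : List V) : Prop :=
  2 ≤ p.length ∧ p.Nodup ∧ ∃ u, p.head? = some u ∧ List.Chain' A (p ++ [u])

/-- `p` is an oriented cycle whose arcs are alternately in the matching `M` (on `X`)
and outside of it. -/
def IsCompatCycle (A : V → V → Prop) (X : Finset V) (M : V → V) (p : List V) : Prop :=
  2 ≤ p.length ∧ p.Nodup ∧ ∃ u, p.head? = some u ∧ List.Chain' A (p ++ [u]) ∧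
    (Alt (InM X M) (NotM A X M) (p ++ [u]) ∨ Alt (NotM A X M) (InM X M) (p ++ [u]))

/-- The digraph `(V, A)` contains an oriented cycle of length `n`. -/
def HasCycleOfLength (A : V → V → Prop) (n : ℕ) : Prop :=
  ∃ p : List V, IsCycle A p ∧ p.length = n

/-- `(V, A)` is a balanced bipartite digraph with colour classes `X`, `Y` of cardinality `a`. -/
def BalancedBipartite (A : V → V → Prop) (X Y : Finset V) (a : ℕ) : Prop :=
  X.card = a ∧ Y.card = a ∧ Disjoint X Y ∧ (∀ v : V, v ∈ X ∨ v ∈ Y) ∧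
    ∀ u v : V, A u v → (u ∈ X ∧ v ∈ Y) ∨ (u ∈ Y ∧ v ∈ X)

/-- Condition (M): `d(u) + d(v) ≥ 3a + 1` for every pair of distinct vertices `u, v`
with no arc between them in either direction. -/
def CondM (A : V → V → Prop) (a : ℕ) : Prop :=
  ∀ u v : V, u ≠ v → ¬ A u v → ¬ A v u → 3 * a + 1 ≤ deg A u + deg A v

/-- Condition (A): `d(x') + d(y') + d(x'') + d(y'') ≥ 6a + 2` for all pairwise distinct
`x', x'' ∈ X`, `y', y'' ∈ Y` joined by `M`-compatible paths from `x'` to `y'` and from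
`x''` to `y''`. -/
def CondA (A : V → V → Prop) (X Y : Finset V) (M : V → V) (a : ℕ) : Prop :=
  ∀ x' x'' y' y'' : V, x' ∈ X → x'' ∈ X → y' ∈ Y → y'' ∈ Y → x' ≠ x'' → y' ≠ y'' →
    (∃ p, IsCompatPathFromTo A X M p x' y') → (∃ p, IsCompatPathFromTo A X M p x'' y'') →
    6 * a + 2 ≤ deg A x' + deg A y' + deg A x'' + deg A y''

/-- An `M`-compatible cycle all of whose vertices lie in `S`. -/
def IsCompatCycleIn (A : V → V → Prop) (X : Finset V) (M : V → V) (S : Set V)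
    (p : List V) : Prop :=
  IsCompatCycle A X M p ∧ ∀ v ∈ p, v ∈ S

/-- An `M`-compatible path from `u` to `v` all of whose vertices lie in `S`. -/
def IsCompatPathFromToIn (A : V → V → Prop) (X : Finset V) (M : V → V) (S : Set V)
    (p : List V) (u v : V) : Prop :=
  IsCompatPathFromTo A X M p u v ∧ ∀ w ∈ p, w ∈ S

/-- The digraph `(V, A)` is strongly connected. -/
def StronglyConnected (A : V → V → Prop) : Prop :=
  ∀ u v : V, u ≠ v →
    ∃ p : List V, p.Chain' A ∧ p.head? = some u ∧ p.getLast? = some v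

open List

/-- helper: mod for m < 2n -/
lemma mod2n {m n : ℕ} (hn : 0 < n) (hm : m < 2 * n) :
    (m % n = m ∧ m < n) ∨ (m % n = m - n ∧ n ≤ m) := by
  rcases lt_or_ge m n with h | h
  · exact Or.inl ⟨Nat.mod_eq_of_lt h, h⟩
  · right
    refine ⟨?_, h⟩
    rw [Nat.mod_eq_sub_mod h, Nat.mod_eq_of_lt (by omega)]

lemma chainIdx {α : Type} {R : α → α → Prop} {l : List α} (h : l.Chain' R) {i : ℕ}
    (hi : i + 1 < l.length) : R l[i] l[i+1] := by
  have := List.isChain_iff_getElem.1 h i (by omega)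
  simpa [List.get_eq_getElem] using this

lemma chainOfIdx {α : Type} {R : α → α → Prop} {l : List α}
    (h : ∀ i (_ : i + 1 < l.length), R l[i] l[i+1]) : l.Chain' R := by
  show l.IsChain R
  rw [List.isChain_iff_getElem]
  intro i hi
  simpa [List.get_eq_getElem] using h i (by omega)

/-- interleave two lists -/
def ilv {α : Type} : List α → List α → List α
  | [], _ => []
  | _ :: _, [] => []
  | x :: xs, y :: ys => x :: y :: ilv xs ys

lemma ilv_perm {α : Type} : ∀ (xs ys : List α), xs.length = ys.length →
    ilv xs ys ~ xs ++ ys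
  | [], [], _ => by simp [ilv]
  | [], _ :: _, h => by simp at h
  | _ :: _, [], h => by simp at h
  | x :: xs, y :: ys, h => by
    have ih := ilv_perm xs ys (by simpa using h)
    calc ilv (x :: xs) (y :: ys) = x :: y :: ilv xs ys := rfl
      _ ~ x :: y :: (xs ++ ys) := (ih.cons y).cons x
      _ ~ x :: (xs ++ y :: ys) := (List.perm_middle.symm).cons x
      _ = (x :: xs) ++ (y :: ys) := rfl

lemma ilv_chain {α : Type} (E : α → α → Prop) :
    ∀ (xs ys : List α) (z : α), xs.length = ys.length →
    (∀ x ∈ xs, ∀ y ∈ ys, E x y) → (∀ y ∈ ys, ∀ x ∈ xs, E y x) → (∀ y ∈ ys, E y z) →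
    List.Chain' E (ilv xs ys ++ [z])
  | [], [], z, _, _, _, _ => by simp [ilv]; exact List.isChain_singleton z
  | [], _ :: _, _, h, _, _, _ => by simp at h
  | _ :: _, [], _, h, _, _, _ => by simp at h
  | x :: xs, y :: ys, z, h, hxy, hyx, hyz => by
    have ih := ilv_chain E xs ys z (by simpa using h)
      (fun x hx y hy => hxy x (by simp [hx]) y (by simp [hy]))
      (fun y hy x hx => hyx y (by simp [hy]) x (by simp [hx]))
      (fun y hy => hyz y (by simp [hy]))
    show List.Chain' E (x :: y :: (ilv xs ys ++ [z]))
    simp only [List.Chain']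
    rw [List.isChain_cons_cons]
    refine ⟨hxy x (by simp) y (by simp), ?_⟩
    rw [List.isChain_cons]
    refine ⟨?_, ih⟩
    intro h hh
    match xs, ys, h, hh with
    | [], [], h, hh => simp [ilv] at hh; subst hh; exact hyz y (by simp)
    | [], _ :: _, _, _ => simp at *
    | _ :: _, [], _, _ => simp at *
    | x' :: xs', y' :: ys', h, hh =>
      simp [ilv] at hh; subst hh; exact hyx y (by simp) x' (by simp)

def HamCyc (E : V → V → Prop) (n : ℕ) : Prop :=
  ∃ p : List V, p.Nodup ∧ p.length = n ∧ ∃ u, p.head? = some u ∧ List.Chain' E (p ++ [u])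

lemma complete_cycle [DecidableEq V] (E : V → V → Prop) (X Y : Finset V) (a : ℕ)
    (ha : 1 ≤ a) (hX : X.card = a) (hY : Y.card = a) (hdisj : Disjoint X Y)
    (hsymm : ∀ u v, E u v → E v u)
    (hcomp : ∀ x ∈ X, ∀ y ∈ Y, E x y) : HamCyc E (2 * a) := by
  set xs := X.toList with hxs
  set ys := Y.toList with hys
  have hlx : xs.length = a := by simp [hxs, hX]
  have hly : ys.length = a := by simp [hys, hY]
  have hlen : xs.length = ys.length := by rw [hlx, hly]
  have hmemx : ∀ x ∈ xs, x ∈ X := by intro x hx; simpa [hxs] using hx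
  have hmemy : ∀ y ∈ ys, y ∈ Y := by intro y hy; simpa [hys] using hy
  obtain ⟨x0, xs', hxx⟩ : ∃ x0 xs', xs = x0 :: xs' := by
    cases hxc : xs with
    | nil => rw [hxc] at hlx; simp at hlx; omega
    | cons h t => exact ⟨h, t, rfl⟩
  obtain ⟨y0, ys', hyy⟩ : ∃ y0 ys', ys = y0 :: ys' := by
    cases hyc : ys with
    | nil => rw [hyc] at hly; simp at hly; omega
    | cons h t => exact ⟨h, t, rfl⟩
  have hperm := ilv_perm xs ys hlen
  refine ⟨ilv xs ys, ?_, ?_, x0, ?_, ?_⟩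
  · refine hperm.symm.nodup ?_
    rw [List.nodup_append]
    exact ⟨X.nodup_toList, Y.nodup_toList,
      fun v hv w hw hvw => (Finset.disjoint_left.1 hdisj (hmemx v hv) (by rw [hvw]; exact hmemy w hw))⟩
  · rw [hperm.length_eq]; simp [hlx, hly]; omega
  · rw [hxx, hyy]; rfl
  · exact ilv_chain E xs ys x0 hlen
      (fun x hx y hy => hcomp x (hmemx x hx) y (hmemy y hy))
      (fun y hy x hx => hsymm _ _ (hcomp x (hmemx x hx) y (hmemy y hy)))
      (fun y hy => hsymm _ _ (hcomp x0 (hmemx x0 (by rw [hxx]; simp)) y (hmemy y hy)))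


lemma rot [Fintype V] [DecidableEq V] (E : V → V → Prop) (X Y : Finset V) (a : ℕ)
    (ha : 2 ≤ a) (hX : X.card = a) (hY : Y.card = a) (hdisj : Disjoint X Y)
    (hcov : ∀ v : V, v ∈ X ∨ v ∈ Y)
    (hsymm : ∀ u v, E u v → E v u)
    (hbip : ∀ u v, E u v → (u ∈ X ∧ v ∈ Y) ∨ (u ∈ Y ∧ v ∈ X))
    (hdeg : ∀ v : V, a + 1 ≤ 2 * Set.ncard {w | E v w})
    (q : List V) (hnd : q.Nodup) (hlen : q.length = 2 * a) (hch : q.Chain' E)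
    (x y : V) (hx : x ∈ X) (hy : y ∈ Y)
    (hhead : q.head? = some x) (hlast : q.getLast? = some y) :
    HamCyc E (2 * a) := by
  classical
  set n := 2 * a with hn
  have hn4 : 4 ≤ n := by omega
  have hqlen : q.length = n := hlen
  have hq0 : q[0]'(by omega) = x := by
    rw [List.head?_eq_getElem?, List.getElem?_eq_getElem (by omega)] at hhead
    exact (Option.some_injective _ hhead)
  have hqlast : q[n-1]'(by omega) = y := by
    rw [List.getLast?_eq_getElem?, hqlen, List.getElem?_eq_getElem (by omega : n - 1 < q.length)] at hlast
    exact (Option.some_injective _ hlast)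
  by_cases hxy : E x y
  · refine ⟨q, hnd, hlen, x, hhead, ?_⟩
    simp only [List.Chain']
    rw [List.isChain_append]
    refine ⟨hch, List.isChain_singleton x, ?_⟩
    intro w hw z hz
    simp at hz; subst hz
    rw [hlast] at hw; simp at hw; subst hw
    exact hsymm _ _ hxy
  -- main case
  set f : ℕ → V := fun i => q.getD i x with hfdef
  have hf : ∀ i (hi : i < n), f i = q[i]'(by omega) := by
    intro i hi
    simp [hfdef, List.getD_eq_getElem?_getD, List.getElem?_eq_getElem (by omega : i < q.length)]
  have hinj : ∀ i j, i < n → j < n → f i = f j → i = j := by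
    intro i j hi hj hij
    rw [hf i hi, hf j hj] at hij
    exact (List.Nodup.getElem_inj_iff hnd).1 hij
  have hmemX : ∀ v, v ∈ X ↔ v ∉ Y := by
    intro v
    constructor
    · intro hv hv'; exact Finset.disjoint_left.1 hdisj hv hv'
    · intro hv; rcases hcov v with h | h
      · exact h
      · exact absurd h hv
  -- alternation
  have halt : ∀ i, i < n → (f i ∈ X ↔ i % 2 = 0) := by
    intro i
    induction i with
    | zero => intro _; rw [hf 0 (by omega), hq0]; simp [hx]
    | succ i ih =>
      intro hi
      have hi' : i < n := by omega
      have hedge : E (q[i]'(by omega)) (q[i+1]'(by omega)) := chainIdx hch (by omega)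
      rw [← hf i hi', ← hf (i+1) hi] at hedge
      have ihi := ih hi'
      rcases hbip _ _ hedge with ⟨h1, h2⟩ | ⟨h1, h2⟩
      · have hi0 : i % 2 = 0 := ihi.1 h1
        have hnx : f (i+1) ∉ X := fun hh => Finset.disjoint_left.1 hdisj hh h2
        constructor
        · intro hh; exact absurd hh hnx
        · intro hh; omega
      · have hni : f i ∉ X := fun hh => Finset.disjoint_left.1 hdisj hh h1
        have hi1 : i % 2 = 1 := by
          rcases Nat.mod_two_eq_zero_or_one i with h | h
          · exact absurd (ihi.2 h) hni
          · exact h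
        constructor
        · intro _; omega
        · intro _; exact h2
  -- q covers the whole vertex set
  have hcovq : ∀ w : V, w ∈ q := by
    have hXY : X ∪ Y = Finset.univ := by
      apply Finset.eq_univ_of_forall
      intro v
      rcases hcov v with h | h
      · exact Finset.mem_union_left _ h
      · exact Finset.mem_union_right _ h
    have hcard : Fintype.card V = n := by
      have h1 := Finset.card_union_of_disjoint hdisj
      rw [hXY, hX, hY] at h1
      rw [← Finset.card_univ, h1]; omega
    have huniv : q.toFinset = Finset.univ := Finset.eq_univ_of_card _
      (by rw [List.toFinset_card_of_nodup hnd, hqlen, hcard])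
    intro w
    have : w ∈ q.toFinset := by rw [huniv]; exact Finset.mem_univ w
    simpa using this
  set I : Finset ℕ := (Finset.range n).filter (fun i => E x (f i)) with hI
  set J : Finset ℕ := (Finset.range n).filter (fun i => i ≠ 0 ∧ E y (f (i-1))) with hJ
  have hNx : Finset.univ.filter (fun w => E x w) = I.image f := by
    ext w
    simp only [hI, Finset.mem_image, Finset.mem_filter, Finset.mem_range, Finset.mem_univ, true_and]
    constructor
    · intro hw
      obtain ⟨t, ht, hqt⟩ := List.mem_iff_getElem.1 (hcovq w)
      have htn : t < n := by omega
      refine ⟨t, ⟨htn, ?_⟩, ?_⟩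
      · rw [hf t htn, hqt]; exact hw
      · rw [hf t htn]; exact hqt
    · rintro ⟨t, ⟨ht, hE⟩, rfl⟩; exact hE
  have hcardI : Set.ncard {w | E x w} = I.card := by
    have h1 : {w | E x w} = ↑(Finset.univ.filter (fun w => E x w)) := by ext w; simp
    rw [h1, Set.ncard_coe_finset, hNx, Finset.card_image_of_injOn]
    intro i hi j hj hij
    simp only [hI, Finset.coe_filter, Set.mem_setOf_eq, Finset.mem_range] at hi hj
    exact hinj i j hi.1 hj.1 hij
  have hIc : a + 1 ≤ 2 * I.card := by rw [← hcardI]; exact hdeg x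
  have hNy : Finset.univ.filter (fun w => E y w) = J.image (fun i => f (i-1)) := by
    ext w
    simp only [hJ, Finset.mem_image, Finset.mem_filter, Finset.mem_range, Finset.mem_univ, true_and]
    constructor
    · intro hw
      obtain ⟨t, ht, hqt⟩ := List.mem_iff_getElem.1 (hcovq w)
      have htn : t < n := by omega
      have hty : t ≠ n - 1 := by
        intro hteq
        subst hteq
        rw [hqlast] at hqt
        subst hqt
        rcases hbip _ _ hw with ⟨h1, h2⟩ | ⟨h1, h2⟩
        · exact Finset.disjoint_left.1 hdisj h1 hy
        · exact Finset.disjoint_left.1 hdisj h2 hy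
      refine ⟨t+1, ⟨by omega, by omega, ?_⟩, ?_⟩
      · simp only [Nat.add_sub_cancel]
        rw [hf t htn, hqt]; exact hw
      · simp only [Nat.add_sub_cancel]
        rw [hf t htn]; exact hqt
    · rintro ⟨t, ⟨ht, ht0, hE⟩, rfl⟩; exact hE
  have hcardJ : Set.ncard {w | E y w} = J.card := by
    have h1 : {w | E y w} = ↑(Finset.univ.filter (fun w => E y w)) := by ext w; simp
    rw [h1, Set.ncard_coe_finset, hNy, Finset.card_image_of_injOn]
    intro i hi j hj hij
    simp only [hJ, Finset.coe_filter, Set.mem_setOf_eq, Finset.mem_range] at hi hj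
    have := hinj (i-1) (j-1) (by omega) (by omega) hij
    omega
  have hJc : a + 1 ≤ 2 * J.card := by rw [← hcardJ]; exact hdeg y
  set O : Finset ℕ := (Finset.range n).filter (fun i => i % 2 = 1) with hO
  have hOcard : O.card = a := by
    have hOim : O = (Finset.range a).image (fun k => 2*k+1) := by
      ext i
      simp only [hO, Finset.mem_image, Finset.mem_filter, Finset.mem_range]
      constructor
      · rintro ⟨h1, h2⟩; exact ⟨i/2, by omega, by omega⟩
      · rintro ⟨k, hk, rfl⟩; omega
    rw [hOim, Finset.card_image_of_injective _ (fun u v h => by simp only [] at h; omega : Function.Injective (fun k => 2*k+1))]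
    simp
  have hIO : I ⊆ O := by
    intro i hi
    simp only [hI, Finset.mem_filter, Finset.mem_range] at hi
    obtain ⟨hin, hE⟩ := hi
    have hfY : f i ∉ X := by
      rcases hbip _ _ hE with ⟨h1, h2⟩ | ⟨h1, h2⟩
      · exact fun hh => Finset.disjoint_left.1 hdisj hh h2
      · exact absurd h1 ((hmemX x).1 hx)
    have h2 := halt i hin
    simp only [hO, Finset.mem_filter, Finset.mem_range]
    refine ⟨hin, by rcases Nat.mod_two_eq_zero_or_one i with h | h
                    · exact absurd (h2.2 h) hfY
                    · exact h⟩
  have hJO : J ⊆ O := by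
    intro i hi
    simp only [hJ, Finset.mem_filter, Finset.mem_range] at hi
    obtain ⟨hin, hi0, hE⟩ := hi
    have hfX : f (i-1) ∈ X := by
      rcases hbip _ _ hE with ⟨h1, h2⟩ | ⟨h1, h2⟩
      · exact absurd h1 (fun hh => Finset.disjoint_left.1 hdisj hh hy)
      · exact h2
    have h2 := (halt (i-1) (by omega)).1 hfX
    simp only [hO, Finset.mem_filter, Finset.mem_range]
    exact ⟨hin, by omega⟩
  have hIJ : 0 < (I ∩ J).card := by
    have h1 := Finset.card_union_add_card_inter I J
    have h2 : (I ∪ J).card ≤ a :=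
      le_trans (Finset.card_le_card (Finset.union_subset hIO hJO)) (le_of_eq hOcard)
    omega
  obtain ⟨i, hiIJ⟩ := Finset.card_pos.1 hIJ
  rw [Finset.mem_inter] at hiIJ
  obtain ⟨hiI, hiJ⟩ := hiIJ
  simp only [hI, Finset.mem_filter, Finset.mem_range] at hiI
  simp only [hJ, Finset.mem_filter, Finset.mem_range] at hiJ
  obtain ⟨hin, hxi⟩ := hiI
  obtain ⟨-, hi0, hyi⟩ := hiJ
  -- build the hamiltonian cycle
  set p := q.take i ++ (q.drop i).reverse with hp
  have htd := List.take_append_drop i q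
  have hperm : p ~ q := by
    calc p ~ q.take i ++ q.drop i := List.Perm.append_left _ (List.reverse_perm _)
      _ = q := htd
  have hplen : p.length = n := by rw [hperm.length_eq, hqlen]
  have htl : (q.take i).length = i := by rw [List.length_take]; omega
  have hdl : (q.drop i).length = n - i := by rw [List.length_drop]; omega
  have hdne : q.drop i ≠ [] := by
    intro h; rw [h] at hdl; simp at hdl; omega
  have hdlast : (q.drop i).getLast? = some y := by
    have hlast2 : (q.take i ++ q.drop i).getLast? = some y := by rw [htd]; exact hlast
    rw [List.getLast?_append, List.getLast?_eq_getLast hdne] at hlast2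
    rw [List.getLast?_eq_getLast hdne]
    simpa using hlast2
  refine ⟨p, hperm.symm.nodup hnd, hplen, x, ?_, ?_⟩
  · rw [List.head?_eq_getElem?, hp, List.getElem?_append, if_pos (by rw [htl]; omega),
      List.getElem?_take, if_pos (by omega), List.getElem?_eq_getElem (by omega : 0 < q.length), hq0]
  · have hassoc : p ++ [x] = q.take i ++ ((q.drop i).reverse ++ [x]) := by
      rw [hp, List.append_assoc]
    rw [hassoc]
    simp only [List.Chain']
    rw [List.isChain_append]
    refine ⟨hch.prefix (List.take_prefix _ _), ?_, ?_⟩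
    · rw [List.isChain_append]
      refine ⟨?_, List.isChain_singleton x, ?_⟩
      · rw [List.isChain_reverse]
        exact (hch.suffix (List.drop_suffix _ _)).imp (fun a b h => hsymm _ _ h)
      · intro w hw z hz
        simp only [List.head?_cons, Option.mem_def, Option.some.injEq] at hz
        subst hz
        rw [List.getLast?_reverse, List.head?_drop,
          List.getElem?_eq_getElem (by omega : i < q.length)] at hw
        simp only [Option.mem_def, Option.some.injEq] at hw
        subst hw
        rw [← hf i hin]
        exact hsymm _ _ hxi
    · intro w hw z hz
      rw [List.getLast?_eq_getElem?, htl,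
        List.getElem?_eq_getElem (by rw [htl]; omega : i - 1 < (q.take i).length)] at hw
      simp only [Option.mem_def, Option.some.injEq] at hw
      have hwq : w = q[i-1]'(by omega) := by
        rw [← hw, List.getElem_take]
      rw [List.head?_append, List.head?_reverse, hdlast] at hz
      simp only [Option.mem_def, Option.or_some, Option.some_or, Option.some.injEq] at hz
      subst hz
      rw [hwq, ← hf (i-1) (by omega)]
      exact hsymm _ _ hyi
lemma cyc_to_path [DecidableEq V] (E E' : V → V → Prop) (p : List V) (n : ℕ) (hn : 4 ≤ n)
    (hplen : p.length = n) (hnd : p.Nodup)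
    (hcyc : ∀ t (ht : t < n), E' (p[t]'(by omega)) (p[(t+1) % n]'(by rw [hplen]; exact Nat.mod_lt _ (by omega))))
    (b c : V) (i : ℕ) (hi : i < n) (hpi : p[i]'(by omega) = b)
    (hpic : p[(i+1) % n]'(by rw [hplen]; exact Nat.mod_lt _ (by omega)) = c)
    (hEE : ∀ u v, E' u v → E u v ∨ (u = b ∧ v = c) ∨ (u = c ∧ v = b)) :
    ∃ q : List V, q.Nodup ∧ q.length = n ∧ q.Chain' E ∧
      q.head? = some c ∧ q.getLast? = some b := by
  set j := (i + 1) % n with hj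
  have hjn : j < n := Nat.mod_lt _ (by omega)
  have hjcase : (j = i + 1 ∧ i + 1 < n) ∨ (j = 0 ∧ i + 1 = n) := by
    rcases mod2n (n := n) (by omega) (by omega : i + 1 < 2 * n) with ⟨h1, h2⟩ | ⟨h1, h2⟩
    · exact Or.inl ⟨h1, h2⟩
    · right; omega
  set q := p.rotate j with hq
  have hqperm : q ~ p := List.rotate_perm p j
  have hqlen : q.length = n := by rw [hqperm.length_eq, hplen]
  have hqk : ∀ k (hk : k < n), q[k]'(by omega) = p[(k + j) % n]'(by
      exact lt_of_lt_of_le (Nat.mod_lt _ (by omega)) (le_of_eq hplen.symm)) := by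
    intro k hk
    simp only [hq, List.getElem_rotate, hplen]
  have hbpos : ∀ s (hs : s < n), p[s]'(by omega) = b → s = i := by
    intro s hs hsb
    exact (List.Nodup.getElem_inj_iff hnd (hi := by omega) (hj := by omega)).1
      (by rw [hsb, hpi])
  have hcpos : ∀ s (hs : s < n), p[s]'(by omega) = c → s = j := by
    intro s hs hsc
    exact (List.Nodup.getElem_inj_iff hnd (hi := by omega) (hj := by omega)).1
      (by rw [hsc, hpic])
  refine ⟨q, hqperm.symm.nodup hnd, hqlen, ?_, ?_, ?_⟩
  · apply chainOfIdx
    intro k hk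
    rw [hqlen] at hk
    have hkk : k < n := by omega
    rw [hqk k hkk, hqk (k+1) hk]
    set s := (k + j) % n with hs
    have hsn : s < n := Nat.mod_lt _ (by omega)
    have hs' : (k + 1 + j) % n = (s + 1) % n := by
      rw [hs, Nat.mod_add_mod]
      ring_nf
    simp only [hs']
    have hedge := hcyc s hsn
    rcases hEE _ _ hedge with h | ⟨h1, h2⟩ | ⟨h1, h2⟩
    · exact h
    · -- p[s] = b, so s = i, so (k+j)%n = i with k ≤ n - 2 : impossible
      exfalso
      have hsi : s = i := hbpos s hsn h1
      rcases hjcase with ⟨hj1, hj2⟩ | ⟨hj1, hj2⟩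
      · rw [hj1] at hs
        rcases mod2n (n := n) (by omega) (by omega : k + (i+1) < 2*n) with ⟨m1, m2⟩ | ⟨m1, m2⟩ <;> omega
      · rw [hj1] at hs
        rcases mod2n (n := n) (by omega) (by omega : k + 0 < 2*n) with ⟨m1, m2⟩ | ⟨m1, m2⟩ <;> omega
    · -- p[s] = c, p[(s+1)%n] = b : s = j and (s+1)%n = i, impossible
      exfalso
      have hsj : s = j := hcpos s hsn h1
      have hsi : (s+1) % n = i := hbpos _ (Nat.mod_lt _ (by omega)) h2
      rcases hjcase with ⟨hj1, hj2⟩ | ⟨hj1, hj2⟩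
      · rw [hsj, hj1] at hsi
        rcases mod2n (n := n) (by omega) (by omega : i + 1 + 1 < 2*n) with ⟨m1, m2⟩ | ⟨m1, m2⟩ <;> omega
      · rw [hsj, hj1] at hsi
        rw [Nat.mod_eq_of_lt (by omega : 0 + 1 < n)] at hsi
        omega
  · have h0 : q[0]'(by omega) = c := by
      rw [hqk 0 (by omega)]
      simpa [Nat.mod_eq_of_lt hjn] using hpic
    rw [List.head?_eq_getElem?, List.getElem?_eq_getElem (by omega : 0 < q.length), h0]
  · have hlst : q[n-1]'(by omega) = b := by
      rw [hqk (n-1) (by omega)]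
      have : (n - 1 + j) % n = i := by
        rcases hjcase with ⟨hj1, hj2⟩ | ⟨hj1, hj2⟩
        · rw [hj1]
          rcases mod2n (n := n) (by omega) (by omega : n - 1 + (i+1) < 2*n) with ⟨m1, m2⟩ | ⟨m1, m2⟩ <;> omega
        · rw [hj1, Nat.mod_eq_of_lt (by omega)]; omega
      simp only [this]
      exact hpi
    rw [List.getLast?_eq_getElem?, hqlen, List.getElem?_eq_getElem (by omega : n - 1 < q.length), hlst]
lemma getElem_idx_congr {α : Type} (l : List α) {i j : ℕ} (h : i = j) (hi : i < l.length) :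
    l[i]'hi = l[j]'(h ▸ hi) := by subst h; rfl

lemma MMaux [Fintype V] [DecidableEq V] (X Y : Finset V) (a : ℕ) (ha : 2 ≤ a)
    (hX : X.card = a) (hY : Y.card = a) (hdisj : Disjoint X Y)
    (hcov : ∀ v : V, v ∈ X ∨ v ∈ Y) :
    ∀ (m : ℕ) (E : V → V → Prop),
      (∀ u v, E u v → E v u) →
      (∀ u v, E u v → (u ∈ X ∧ v ∈ Y) ∨ (u ∈ Y ∧ v ∈ X)) →
      (∀ v : V, a + 1 ≤ 2 * Set.ncard {w | E v w}) →
      Set.ncard {z : V × V | z.1 ∈ X ∧ z.2 ∈ Y ∧ ¬ E z.1 z.2} ≤ m →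
      HamCyc E (2 * a) := by
  intro m
  induction m with
  | zero =>
    intro E hsymm hbip hdeg hm
    apply complete_cycle E X Y a (by omega) hX hY hdisj hsymm
    intro x hx y hy
    by_contra hE
    have hmem : ((x, y) : V × V) ∈ {z : V × V | z.1 ∈ X ∧ z.2 ∈ Y ∧ ¬ E z.1 z.2} :=
      ⟨hx, hy, hE⟩
    have := (Set.ncard_pos (Set.toFinite _)).2 ⟨_, hmem⟩
    omega
  | succ m ih =>
    intro E hsymm hbip hdeg hm
    by_cases hcomp : ∀ x ∈ X, ∀ y ∈ Y, E x y
    · exact complete_cycle E X Y a (by omega) hX hY hdisj hsymm hcomp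
    push_neg at hcomp
    obtain ⟨x, hx, y, hy, hxy⟩ := hcomp
    set E' : V → V → Prop := fun u v => E u v ∨ (u = x ∧ v = y) ∨ (u = y ∧ v = x) with hE'def
    have hsymm' : ∀ u v, E' u v → E' v u := by
      rintro u v (h | ⟨rfl, rfl⟩ | ⟨rfl, rfl⟩)
      · exact Or.inl (hsymm _ _ h)
      · exact Or.inr (Or.inr ⟨rfl, rfl⟩)
      · exact Or.inr (Or.inl ⟨rfl, rfl⟩)
    have hbip' : ∀ u v, E' u v → (u ∈ X ∧ v ∈ Y) ∨ (u ∈ Y ∧ v ∈ X) := by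
      rintro u v (h | ⟨rfl, rfl⟩ | ⟨rfl, rfl⟩)
      · exact hbip _ _ h
      · exact Or.inl ⟨hx, hy⟩
      · exact Or.inr ⟨hy, hx⟩
    have hdeg' : ∀ v : V, a + 1 ≤ 2 * Set.ncard {w | E' v w} := by
      intro v
      refine le_trans (hdeg v) ?_
      have hsub : {w | E v w} ⊆ {w | E' v w} := fun w hw => Or.inl hw
      have := Set.ncard_le_ncard hsub (Set.toFinite _)
      omega
    have hcard' : Set.ncard {z : V × V | z.1 ∈ X ∧ z.2 ∈ Y ∧ ¬ E' z.1 z.2} ≤ m := by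
      have hss : {z : V × V | z.1 ∈ X ∧ z.2 ∈ Y ∧ ¬ E' z.1 z.2} ⊂
          {z : V × V | z.1 ∈ X ∧ z.2 ∈ Y ∧ ¬ E z.1 z.2} := by
        constructor
        · rintro z ⟨h1, h2, h3⟩
          exact ⟨h1, h2, fun hh => h3 (Or.inl hh)⟩
        · intro hsub
          have hmem : ((x, y) : V × V) ∈ {z : V × V | z.1 ∈ X ∧ z.2 ∈ Y ∧ ¬ E z.1 z.2} :=
            ⟨hx, hy, hxy⟩
          obtain ⟨-, -, h3⟩ := hsub hmem
          exact h3 (Or.inr (Or.inl ⟨rfl, rfl⟩))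
      have := Set.ncard_lt_ncard hss (Set.toFinite _)
      omega
    obtain ⟨p, hnd, hplen, u, hhead, hch'⟩ := ih E' hsymm' hbip' hdeg' hcard'
    by_cases hE : List.Chain' E (p ++ [u])
    · exact ⟨p, hnd, hplen, u, hhead, hE⟩
    set n := 2 * a with hn
    have hn4 : 4 ≤ n := by omega
    have hrlen : (p ++ [u]).length = n + 1 := by simp [hplen]
    have hp0 : p[0]'(by rw [hplen]; omega) = u := by
      rw [List.head?_eq_getElem?, List.getElem?_eq_getElem (by rw [hplen]; omega : 0 < p.length)] at hhead
      exact Option.some_injective _ hhead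
    have hr : ∀ t (ht : t < n), (p ++ [u])[t]'(by omega) = p[t]'(by omega) := by
      intro t ht
      exact List.getElem_append_left (by omega)
    have hrn : (p ++ [u])[n]'(by omega) = p[0]'(by rw [hplen]; omega) := by
      rw [List.getElem_append_right hplen.le]
      simp [hplen, hp0]
    have hmodlt : ∀ t, t < n → (t+1) % n < p.length := by
      intro t ht; rw [hplen]; exact Nat.mod_lt _ (by omega)
    have hcyc : ∀ t (ht : t < n), E' (p[t]'(by omega)) (p[(t+1) % n]'(hmodlt t ht)) := by
      intro t ht
      have hpair := chainIdx hch' (by rw [hrlen]; omega : t + 1 < (p ++ [u]).length)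
      rcases Nat.lt_or_ge (t+1) n with h | h
      · rw [hr t ht, hr (t+1) h] at hpair
        have : (t+1) % n = t + 1 := Nat.mod_eq_of_lt h
        simp only [this]
        exact hpair
      · have htn : t + 1 = n := by omega
        have h0 : (t+1) % n = 0 := by rw [htn, Nat.mod_self]
        simp only [h0]
        rw [hr t ht] at hpair
        have heq : (p ++ [u])[t+1]'(by rw [hrlen]; omega) = p[0]'(by rw [hplen]; omega) :=
          (getElem_idx_congr _ htn _).trans hrn
        rw [heq] at hpair
        exact hpair
    obtain ⟨i, hi1, hiE⟩ : ∃ i, ∃ (hi : i < n), ¬ E ((p++[u])[i]'(by omega)) ((p++[u])[i+1]'(by omega)) := by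
      by_contra hc
      push_neg at hc
      refine hE (chainOfIdx ?_)
      intro i hi
      exact hc i (by rw [hrlen] at hi; omega)
    have hiE' := chainIdx hch' (by rw [hrlen]; omega : i + 1 < (p ++ [u]).length)
    have hri : (p++[u])[i]'(by omega) = p[i]'(by omega) := hr i hi1
    have hri1 : (p++[u])[i+1]'(by rw [hrlen]; omega) = p[(i+1) % n]'(hmodlt i hi1) := by
      rcases Nat.lt_or_ge (i+1) n with h | h
      · rw [hr (i+1) h]
        simp only [Nat.mod_eq_of_lt h]
      · have htn : i + 1 = n := by omega
        have h0 : (i+1) % n = 0 := by rw [htn, Nat.mod_self]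
        simp only [h0]
        exact (getElem_idx_congr _ htn _).trans hrn
    rw [hri, hri1] at hiE hiE'
    have hEE : ∀ w z, E' w z → E w z ∨ (w = x ∧ z = y) ∨ (w = y ∧ z = x) := fun w z h => h
    have hbad : (p[i]'(by omega) = x ∧ p[(i+1) % n]'(hmodlt i hi1) = y) ∨
        (p[i]'(by omega) = y ∧ p[(i+1) % n]'(hmodlt i hi1) = x) := by
      rcases hEE _ _ hiE' with h | h | h
      · exact absurd h hiE
      · exact Or.inl h
      · exact Or.inr h
    rcases hbad with ⟨hb1, hb2⟩ | ⟨hb1, hb2⟩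
    · -- pair (x, y) : path from y to x, reverse it
      obtain ⟨q, hqnd, hqlen, hqch, hqhead, hqlast⟩ :=
        cyc_to_path E E' p n hn4 hplen hnd hcyc x y i hi1 hb1 hb2 hEE
      refine rot E X Y a ha hX hY hdisj hcov hsymm hbip hdeg q.reverse
        (List.nodup_reverse.2 hqnd) (by rw [List.length_reverse, hqlen])
        (List.isChain_reverse.2 (hqch.imp (fun a b h => hsymm _ _ h)))
        x y hx hy (by rw [List.head?_reverse, hqlast]) (by rw [List.getLast?_reverse, hqhead])
    · -- pair (y, x) : path from x to y directly
      obtain ⟨q, hqnd, hqlen, hqch, hqhead, hqlast⟩ :=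
        cyc_to_path E E' p n hn4 hplen hnd hcyc y x i hi1 hb1 hb2
          (fun w z h => by rcases hEE w z h with h' | h' | h'
                           · exact Or.inl h'
                           · exact Or.inr (Or.inr h')
                           · exact Or.inr (Or.inl h'))
      exact rot E X Y a ha hX hY hdisj hcov hsymm hbip hdeg q hqnd hqlen hqch
        x y hx hy hqhead hqlast
lemma MMfinal [Fintype V] [DecidableEq V] (X Y : Finset V) (a : ℕ) (ha : 2 ≤ a)
    (hX : X.card = a) (hY : Y.card = a) (hdisj : Disjoint X Y)
    (hcov : ∀ v : V, v ∈ X ∨ v ∈ Y) (E : V → V → Prop)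
    (hsymm : ∀ u v, E u v → E v u)
    (hbip : ∀ u v, E u v → (u ∈ X ∧ v ∈ Y) ∨ (u ∈ Y ∧ v ∈ X))
    (hdeg : ∀ v : V, a + 1 ≤ 2 * Set.ncard {w | E v w}) : HamCyc E (2 * a) :=
  MMaux X Y a ha hX hY hdisj hcov _ E hsymm hbip hdeg le_rfl
/-- a balanced bipartite digraph on `2a` vertices (`a ≥ 2`) with minimal
degree `δ(D) ≥ (3a+1)/2` contains an oriented cycle of length `2a`. -/
theorem stmt9 {V : Type} [Fintype V] [DecidableEq V] (A : V → V → Prop)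
    (X Y : Finset V) (a : ℕ) (ha : 2 ≤ a)
    (hbb : BalancedBipartite A X Y a)
    (hdeg : ∀ v : V, 3 * a + 1 ≤ 2 * deg A v) :
    HasCycleOfLength A (2 * a) := by
  classical
  obtain ⟨hXc, hYc, hdisj, hcov, hbip⟩ := hbb
  set E : V → V → Prop := fun u v => A u v ∧ A v u with hEdef
  have hsymmE : ∀ u v, E u v → E v u := fun u v h => ⟨h.2, h.1⟩
  have hbipE : ∀ u v, E u v → (u ∈ X ∧ v ∈ Y) ∨ (u ∈ Y ∧ v ∈ X) := fun u v h => hbip u v h.1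
  have hdegE : ∀ v : V, a + 1 ≤ 2 * Set.ncard {w | E v w} := by
    intro v
    set s : Set V := {w | A v w} with hs
    set t : Set V := {w | A w v} with ht
    have hso : s.ncard = outdeg A v := (Nat.card_coe_set_eq s).symm
    have hto : t.ncard = indeg A v := (Nat.card_coe_set_eq t).symm
    have hdv : 3 * a + 1 ≤ 2 * (s.ncard + t.ncard) := by
      rw [hso, hto]; exact hdeg v
    have hun : (s ∪ t).ncard ≤ a := by
      rcases hcov v with hv | hv
      · have hsub : s ∪ t ⊆ ↑Y := by
          rintro w (hw | hw)
          · rcases hbip v w hw with ⟨h1, h2⟩ | ⟨h1, h2⟩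
            · exact h2
            · exact absurd h1 (Finset.disjoint_left.1 hdisj hv)
          · rcases hbip w v hw with ⟨h1, h2⟩ | ⟨h1, h2⟩
            · exact absurd h2 (Finset.disjoint_left.1 hdisj hv)
            · exact h1
        calc (s ∪ t).ncard ≤ (↑Y : Set V).ncard := Set.ncard_le_ncard hsub (Set.toFinite _)
          _ = a := by rw [Set.ncard_coe_finset, hYc]
      · have hsub : s ∪ t ⊆ ↑X := by
          rintro w (hw | hw)
          · rcases hbip v w hw with ⟨h1, h2⟩ | ⟨h1, h2⟩
            · exact absurd h1 (Finset.disjoint_left.1 (disjoint_comm.1 hdisj) hv)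
            · exact h2
          · rcases hbip w v hw with ⟨h1, h2⟩ | ⟨h1, h2⟩
            · exact h1
            · exact absurd h2 (Finset.disjoint_left.1 (disjoint_comm.1 hdisj) hv)
        calc (s ∪ t).ncard ≤ (↑X : Set V).ncard := Set.ncard_le_ncard hsub (Set.toFinite _)
          _ = a := by rw [Set.ncard_coe_finset, hXc]
    have hsum : (s ∪ t).ncard + (s ∩ t).ncard = s.ncard + t.ncard :=
      Set.ncard_union_add_ncard_inter s t (Set.toFinite _) (Set.toFinite _)
    have hint : {w | E v w} = s ∩ t := by
      ext w; simp [hEdef, hs, ht, Set.mem_inter_iff]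
    rw [hint]
    omega
  obtain ⟨p, hnd, hplen, u, hhead, hch⟩ :=
    MMfinal X Y a ha hXc hYc hdisj hcov E hsymmE hbipE hdegE
  exact ⟨p, ⟨by omega, hnd, u, hhead, hch.imp (fun w z h => h.1)⟩, hplen⟩


end BipDigraph
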